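/- Let X be a set and ≤↓ a preorder on X × ℝ satisfying property (*): if (p,r) ≤↓ (p',r') and max(0, s'−s) ≤ max(0, r'−r) then (p,s) ≤↓ (p',s'). Define the projected relation x ≤ y iff (x,0) ≤↓ (y,0), and τ(x,y) := sup{b : (x,0) ≤↓ (y,b)} (−∞ if the set is empty). Then ≤ is a preorder on X, τ(x,y) ≥ 0 iff x ≤ y, and τ satisfies the reverse triangle inequality τ(x,y) + τ(y,z) ≤ τ(x,z) for all x,y,z (with convention −∞ + t = −∞). -/
import Mathlib


/-- Given a preorder `≤↓` on `X × ℝ` satisfying property (*), the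
projected relation `x ≤ y ↔ (x,0) ≤↓ (y,0)` is a preorder, the time separation
`τ(x,y) = sup{b : (x,0) ≤↓ (y,b)}` (which is `−∞` when the set is empty) is
nonnegative exactly on the graph of `≤`, and `τ` satisfies the reverse triangle
inequality. -/
theorem stmt_15 {X : Type*} (led : X × ℝ → X × ℝ → Prop)
    (hrefl : Reflexive led) (htrans : Transitive led)
    (hstar : ∀ p p' : X, ∀ r r' s s' : ℝ, led (p, r) (p', r') →
      max 0 (s' - s) ≤ max 0 (r' - r) → led (p, s) (p', s'))
    (le : X → X → Prop) (hle : ∀ x y, le x y ↔ led (x, 0) (y, 0))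
    (τ : X → X → EReal)
    (hτ : ∀ x y, τ x y = sSup (((↑) : ℝ → EReal) '' {b : ℝ | led (x, 0) (y, b)})) :
    (Reflexive le ∧ Transitive le) ∧
    (∀ x y, 0 ≤ τ x y ↔ le x y) ∧
    (∀ x y z, τ x y + τ y z ≤ τ x z) := by
  -- any element of the set gives `led (x,0) (y,0)`
  have hdown : ∀ (x y : X) (b : ℝ), led (x, 0) (y, b) → led (x, 0) (y, 0) := by
    intro x y b h
    exact hstar x y 0 b 0 0 h (by simp [le_max_iff])
  -- shift lemma
  have hshift : ∀ (y z : X) (a b : ℝ), led (y, 0) (z, b) → led (y, a) (z, a + b) := by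
    intro y z a b h
    exact hstar y z 0 b a (a + b) h (by simp)
  refine ⟨⟨fun x => (hle x x).2 (hrefl _), fun x y z hxy hyz =>
      (hle x z).2 (htrans ((hle x y).1 hxy) ((hle y z).1 hyz))⟩, ?_, ?_⟩
  · intro x y
    rw [hτ]
    constructor
    · intro h
      have hne : {b : ℝ | led (x, 0) (y, b)}.Nonempty := by
        by_contra hemp
        rw [Set.not_nonempty_iff_eq_empty] at hemp
        simp [hemp] at h
      obtain ⟨b, hb⟩ := hne
      exact (hle x y).2 (hdown x y b hb)
    · intro h
      exact le_sSup ⟨0, (hle x y).1 h, rfl⟩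
  · intro x y z
    rw [hτ, hτ, hτ]
    apply EReal.add_le_of_forall_lt
    intro a' ha' b' hb'
    obtain ⟨_, ⟨a, ha, rfl⟩, haa⟩ := lt_sSup_iff.1 ha'
    obtain ⟨_, ⟨b, hb, rfl⟩, hbb⟩ := lt_sSup_iff.1 hb'
    have : led (x, 0) (z, a + b) := htrans ha (hshift y z a b hb)
    calc a' + b' ≤ (a : EReal) + (b : EReal) := add_le_add haa.le hbb.le
      _ = ((a + b : ℝ) : EReal) := by norm_cast
      _ ≤ _ := le_sSup (Set.mem_image_of_mem _ this)
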